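/- Let K₁,…,K_m be nonnegative n×n matrices and α ∈ [0,1]. Then r(S_α(K₁) + ⋯ + S_α(K_m)) ≤ r(S_α(K₁ + ⋯ + K_m)) ≤ r(K₁ + ⋯ + K_m), where S_α(K) has entries K(i,j)^α K(j,i)^{1−α}. -/

import Mathlib

open scoped ENNReal
open Finset
noncomputable def specRad {n : ℕ} (A : Matrix (Fin n) (Fin n) ℝ) : ℝ≥0∞ :=
  spectralRadius ℂ (A.map (algebraMap ℝ ℂ))
noncomputable def opNorm {n : ℕ} (A : Matrix (Fin n) (Fin n) ℝ) : ℝ :=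
  ‖Matrix.toEuclideanCLM (𝕜 := ℝ) A‖

open Filter Topology
set_option synthInstance.maxHeartbeats 1000000
set_option maxHeartbeats 1600000

section Aux

lemma hoelder {ι : Type*} (s : Finset ι) (f g : ι → ℝ) (hf : ∀ i, 0 ≤ f i) (hg : ∀ i, 0 ≤ g i)
    {α : ℝ} (hα : α ∈ Set.Icc (0:ℝ) 1) :
    ∑ i ∈ s, f i ^ α * g i ^ (1 - α) ≤ (∑ i ∈ s, f i) ^ α * (∑ i ∈ s, g i) ^ (1 - α) := by
  obtain ⟨h0, h1⟩ := hα
  rcases eq_or_lt_of_le h0 with rfl | h0'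
  · simp
  rcases eq_or_lt_of_le h1 with rfl | h1'
  · simp
  have hpq : Real.HolderConjugate α⁻¹ (1 - α)⁻¹ := by
    rw [Real.holderConjugate_iff]
    constructor
    · exact (one_lt_inv₀ h0').mpr h1'
    · rw [inv_inv, inv_inv]; ring
  have H := Real.inner_le_Lp_mul_Lq_of_nonneg (s := s) hpq
    (f := fun i => f i ^ α) (g := fun i => g i ^ (1 - α))
    (fun i _ => Real.rpow_nonneg (hf i) _) (fun i _ => Real.rpow_nonneg (hg i) _)
  simp only [← Real.rpow_mul (hf _), ← Real.rpow_mul (hg _),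
    mul_inv_cancel₀ (ne_of_gt h0'), mul_inv_cancel₀ (by linarith : (1:ℝ) - α ≠ 0),
    Real.rpow_one, one_div, inv_inv] at H
  exact H

lemma rpow_mul_rpow_le {x y α : ℝ} (hx : 0 ≤ x) (hy : 0 ≤ y) (hα : α ∈ Set.Icc (0:ℝ) 1) :
    x ^ α * y ^ (1 - α) ≤ x + y := by
  obtain ⟨h0, h1⟩ := hα
  have hm : 0 ≤ max x y := le_max_of_le_left hx
  calc x ^ α * y ^ (1 - α) ≤ (max x y) ^ α * (max x y) ^ (1 - α) := by
        gcongr <;> first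
          | exact hx | exact hy | exact le_max_left x y | exact le_max_right x y | linarith
    _ = (max x y) ^ (α + (1 - α)) := (Real.rpow_add_of_nonneg hm h0 (by linarith)).symm
    _ = max x y := by norm_num
    _ ≤ x + y := max_le (by linarith) (by linarith)

noncomputable def Tc {n : ℕ} (A : Matrix (Fin n) (Fin n) ℝ) :
    EuclideanSpace ℂ (Fin n) →L[ℂ] EuclideanSpace ℂ (Fin n) :=
  Matrix.toEuclideanCLM (𝕜 := ℂ) (A.map (algebraMap ℝ ℂ))

lemma Tc_apply {n : ℕ} (A : Matrix (Fin n) (Fin n) ℝ) (x : EuclideanSpace ℂ (Fin n)) (i : Fin n) :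
    Tc A x i = ∑ j, (A i j : ℂ) * x j := rfl

lemma Tc_normMono {n : ℕ} {A B : Matrix (Fin n) (Fin n) ℝ} (hA : ∀ i j, 0 ≤ A i j)
    (hAB : ∀ i j, A i j ≤ B i j) : ‖Tc A‖ ≤ ‖Tc B‖ := by
  apply ContinuousLinearMap.opNorm_le_bound _ (norm_nonneg (Tc B))
  intro x
  set y : EuclideanSpace ℂ (Fin n) := WithLp.toLp 2 (fun j => (‖x j‖ : ℂ)) with hy
  have hynorm : ‖y‖ = ‖x‖ := by
    rw [EuclideanSpace.norm_eq, EuclideanSpace.norm_eq]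
    congr 1
    apply Finset.sum_congr rfl
    intro j _
    simp [hy]
  have key : ‖Tc A x‖ ≤ ‖Tc B y‖ := by
    rw [EuclideanSpace.norm_eq, EuclideanSpace.norm_eq]
    apply Real.sqrt_le_sqrt
    apply Finset.sum_le_sum
    intro i _
    have h1 : ‖Tc A x i‖ ≤ ‖Tc B y i‖ := by
      rw [Tc_apply, Tc_apply]
      calc ‖∑ j, (A i j : ℂ) * x j‖ ≤ ∑ j, ‖(A i j : ℂ) * x j‖ := norm_sum_le _ _
        _ = ∑ j, A i j * ‖x j‖ := by
            apply Finset.sum_congr rfl; intro j _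
            rw [norm_mul, Complex.norm_real, Real.norm_of_nonneg (hA i j)]
        _ ≤ ∑ j, B i j * ‖x j‖ := by
            apply Finset.sum_le_sum; intro j _
            exact mul_le_mul_of_nonneg_right (hAB i j) (norm_nonneg _)
        _ = ‖((∑ j, B i j * ‖x j‖ : ℝ) : ℂ)‖ := by
            rw [Complex.norm_real, Real.norm_of_nonneg]
            exact Finset.sum_nonneg fun j _ => mul_nonneg ((hA i j).trans (hAB i j)) (norm_nonneg _)
        _ = ‖∑ j, (B i j : ℂ) * (‖x j‖ : ℂ)‖ := by push_cast; rfl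
        _ = ‖Tc B y i‖ := by rw [Tc_apply]
    exact pow_le_pow_left₀ (norm_nonneg _) h1 2
  calc ‖Tc A x‖ ≤ ‖Tc B y‖ := key
    _ ≤ ‖Tc B‖ * ‖y‖ := (Tc B).le_opNorm y
    _ = ‖Tc B‖ * ‖x‖ := by rw [hynorm]

lemma specRad_eq_Tc {n : ℕ} (A : Matrix (Fin n) (Fin n) ℝ) :
    specRad A = spectralRadius ℂ (Tc A) := by
  unfold specRad spectralRadius Tc
  rw [AlgEquiv.spectrum_eq (Matrix.toEuclideanCLM (𝕜 := ℂ) (n := Fin n))]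

lemma Tc_pow {n : ℕ} (A : Matrix (Fin n) (Fin n) ℝ) (N : ℕ) :
    Tc (A ^ N) = (Tc A) ^ N := by
  unfold Tc
  rw [← RingHom.mapMatrix_apply, map_pow, map_pow, RingHom.mapMatrix_apply]

lemma Tc_tendsto {n : ℕ} (A : Matrix (Fin n) (Fin n) ℝ) :
    Tendsto (fun N : ℕ => (‖Tc (A ^ N)‖₊ : ℝ≥0∞) ^ (1 / N : ℝ)) atTop (𝓝 (specRad A)) := by
  rw [specRad_eq_Tc]
  simpa only [Tc_pow] using
    spectrum.pow_nnnorm_pow_one_div_tendsto_nhds_spectralRadius (Tc A)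

lemma entrywise_pow_le {n : ℕ} {A B : Matrix (Fin n) (Fin n) ℝ} (hA : ∀ i j, 0 ≤ A i j)
    (hAB : ∀ i j, A i j ≤ B i j) (N : ℕ) :
    (∀ i j, 0 ≤ (A ^ N) i j) ∧ (∀ i j, (A ^ N) i j ≤ (B ^ N) i j) := by
  induction N with
  | zero =>
    refine ⟨fun i j => ?_, fun i j => le_refl _⟩
    simp only [pow_zero, Matrix.one_apply]
    split <;> norm_num
  | succ N ih =>
    rw [pow_succ, pow_succ]
    refine ⟨fun i j => ?_, fun i j => ?_⟩
    · rw [Matrix.mul_apply]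
      exact Finset.sum_nonneg fun k _ => mul_nonneg (ih.1 i k) (hA k j)
    · rw [Matrix.mul_apply, Matrix.mul_apply]
      exact Finset.sum_le_sum fun k _ =>
        mul_le_mul (ih.2 i k) (hAB k j) (hA k j) ((ih.1 i k).trans (ih.2 i k))

lemma specRad_mono {n : ℕ} {A B : Matrix (Fin n) (Fin n) ℝ} (hA : ∀ i j, 0 ≤ A i j)
    (hAB : ∀ i j, A i j ≤ B i j) : specRad A ≤ specRad B := by
  refine le_of_tendsto_of_tendsto' (Tc_tendsto A) (Tc_tendsto B) fun N => ?_
  have h := Tc_normMono (entrywise_pow_le hA hAB N).1 (entrywise_pow_le hA hAB N).2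
  exact ENNReal.rpow_le_rpow (by exact_mod_cast h) (by positivity)

lemma Tc_transpose_norm {n : ℕ} (A : Matrix (Fin n) (Fin n) ℝ) : ‖Tc A.transpose‖ = ‖Tc A‖ := by
  have h : (A.transpose.map (algebraMap ℝ ℂ)) = (A.map (algebraMap ℝ ℂ)).conjTranspose := by
    ext i j
    simp [Matrix.conjTranspose_apply, Matrix.map_apply, Complex.conj_ofReal]
  open scoped Matrix.Norms.L2Operator in
  unfold Tc
  rw [h, ← Matrix.cstar_norm_def, ← Matrix.cstar_norm_def,
    Matrix.l2_opNorm_conjTranspose]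

lemma tendsto_two_rpow : Tendsto (fun N : ℕ => ((2:ℝ≥0∞)) ^ (1 / N : ℝ)) atTop (𝓝 1) := by
  have h1 : Tendsto (fun N : ℕ => (1 / N : ℝ)) atTop (𝓝 0) := by
    simpa using tendsto_one_div_atTop_nhds_zero_nat (𝕜 := ℝ)
  have hc : ContinuousAt (fun r : ℝ => ((2:ℝ) ^ r : ℝ)) 0 :=
    Real.continuousAt_const_rpow (by norm_num)
  have h3 : Tendsto (fun N : ℕ => ((2:ℝ) ^ (1 / N : ℝ) : ℝ)) atTop (𝓝 1) := by
    have := hc.tendsto.comp h1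
    simpa [Function.comp_def] using this
  have h4 : Tendsto (fun N : ℕ => ENNReal.ofReal ((2:ℝ) ^ (1 / N : ℝ))) atTop
      (𝓝 (ENNReal.ofReal 1)) := (ENNReal.continuous_ofReal.tendsto _).comp h3
  rw [ENNReal.ofReal_one] at h4
  convert h4 using 2 with N
  rw [show (2:ℝ≥0∞) = ENNReal.ofReal 2 by norm_num,
    ENNReal.ofReal_rpow_of_pos (by norm_num)]

end Aux
section Part2
variable {n : ℕ} {M : Matrix (Fin n) (Fin n) ℝ} {α : ℝ}

lemma S_nonneg (hM : ∀ i j, 0 ≤ M i j) :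
    ∀ i j, 0 ≤ (Matrix.of fun i j => M i j ^ α * M j i ^ (1 - α)) i j := fun i j =>
  mul_nonneg (Real.rpow_nonneg (hM i j) _) (Real.rpow_nonneg (hM j i) _)

lemma S_pow_le (hM : ∀ i j, 0 ≤ M i j) (hα : α ∈ Set.Icc (0:ℝ) 1) (N : ℕ) :
    ∀ i j, ((Matrix.of fun i j => M i j ^ α * M j i ^ (1 - α)) ^ N) i j ≤
      (M ^ N) i j ^ α * (M ^ N) j i ^ (1 - α) := by
  set S := Matrix.of fun i j => M i j ^ α * M j i ^ (1 - α) with hS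
  have hSnn : ∀ i j, 0 ≤ S i j := S_nonneg hM
  induction N with
  | zero =>
    intro i j
    simp only [pow_zero, Matrix.one_apply]
    rcases eq_or_ne i j with rfl | hij
    · simp
    · simp only [if_neg hij, if_neg (Ne.symm hij)]
      positivity
  | succ N ih =>
    intro i j
    have hSN : ∀ i j, 0 ≤ (S ^ N) i j := (entrywise_pow_le hSnn (fun _ _ => le_rfl) N).1
    have hMN : ∀ i j, 0 ≤ (M ^ N) i j := (entrywise_pow_le hM (fun _ _ => le_rfl) N).1
    rw [pow_succ', Matrix.mul_apply]
    calc ∑ k, S i k * (S ^ N) k j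
        ≤ ∑ k, (M i k * (M ^ N) k j) ^ α * (M k i * (M ^ N) j k) ^ (1 - α) := by
          apply Finset.sum_le_sum
          intro k _
          have h1 : S i k * (S ^ N) k j ≤
              (M i k ^ α * M k i ^ (1 - α)) * ((M ^ N) k j ^ α * (M ^ N) j k ^ (1 - α)) :=
            mul_le_mul le_rfl (ih k j) (hSN k j) (hSnn i k)
          refine h1.trans (le_of_eq ?_)
          rw [Real.mul_rpow (hM i k) (hMN k j), Real.mul_rpow (hM k i) (hMN j k)]
          ring
      _ ≤ (∑ k, M i k * (M ^ N) k j) ^ α * (∑ k, M k i * (M ^ N) j k) ^ (1 - α) :=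
          hoelder Finset.univ _ _ (fun k => mul_nonneg (hM i k) (hMN k j))
            (fun k => mul_nonneg (hM k i) (hMN j k)) hα
      _ = (M * M ^ N) i j ^ α * (M ^ N * M) j i ^ (1 - α) := by
          rw [Matrix.mul_apply, Matrix.mul_apply]
          congr 2
          apply Finset.sum_congr rfl
          intro k _
          ring
      _ = (M * M ^ N) i j ^ α * (M * M ^ N) j i ^ (1 - α) := by
          rw [show M ^ N * M = M * M ^ N from (pow_succ M N).symm.trans (pow_succ' M N)]
      _ = (M ^ (N + 1)) i j ^ α * (M ^ (N + 1)) j i ^ (1 - α) := by rw [← pow_succ']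

lemma specRad_S_le (hM : ∀ i j, 0 ≤ M i j) (hα : α ∈ Set.Icc (0:ℝ) 1) :
    specRad (Matrix.of fun i j => M i j ^ α * M j i ^ (1 - α)) ≤ specRad M := by
  set S := Matrix.of fun i j => M i j ^ α * M j i ^ (1 - α) with hS
  have hSnn : ∀ i j, 0 ≤ S i j := S_nonneg hM
  have htarget : Filter.Tendsto
      (fun N : ℕ => (2:ℝ≥0∞) ^ (1 / N : ℝ) * (‖Tc (M ^ N)‖₊ : ℝ≥0∞) ^ (1 / N : ℝ))
      Filter.atTop (𝓝 (specRad M)) := by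
    have := ENNReal.Tendsto.mul tendsto_two_rpow (Or.inl one_ne_zero)
      (Tc_tendsto M) (Or.inr ENNReal.one_ne_top)
    rwa [one_mul] at this
  refine le_of_tendsto_of_tendsto' (Tc_tendsto S) htarget fun N => ?_
  have hMN : ∀ i j, 0 ≤ (M ^ N) i j := (entrywise_pow_le hM (fun _ _ => le_rfl) N).1
  have hSN : ∀ i j, 0 ≤ (S ^ N) i j := (entrywise_pow_le hSnn (fun _ _ => le_rfl) N).1
  have hnorm : ‖Tc (S ^ N)‖ ≤ 2 * ‖Tc (M ^ N)‖ := by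
    have hle : ∀ i j, (S ^ N) i j ≤ (M ^ N + (M ^ N).transpose) i j := by
      intro i j
      refine (S_pow_le hM hα N i j).trans ?_
      simp only [Matrix.add_apply, Matrix.transpose_apply]
      exact rpow_mul_rpow_le (hMN i j) (hMN j i) hα
    have h1 : ‖Tc (S ^ N)‖ ≤ ‖Tc (M ^ N + (M ^ N).transpose)‖ := Tc_normMono hSN hle
    have h2 : Tc (M ^ N + (M ^ N).transpose) = Tc (M ^ N) + Tc ((M ^ N).transpose) := by
      unfold Tc
      rw [← RingHom.mapMatrix_apply, ← RingHom.mapMatrix_apply, ← RingHom.mapMatrix_apply,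
        map_add, map_add]
    calc ‖Tc (S ^ N)‖ ≤ ‖Tc (M ^ N + (M ^ N).transpose)‖ := h1
      _ ≤ ‖Tc (M ^ N)‖ + ‖Tc ((M ^ N).transpose)‖ := by rw [h2]; exact norm_add_le _ _
      _ = 2 * ‖Tc (M ^ N)‖ := by rw [Tc_transpose_norm]; ring
  have hnn : ‖Tc (S ^ N)‖₊ ≤ 2 * ‖Tc (M ^ N)‖₊ := by
    rw [← NNReal.coe_le_coe]
    push_cast
    exact hnorm
  calc (‖Tc (S ^ N)‖₊ : ℝ≥0∞) ^ (1 / N : ℝ)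
      ≤ ((2:ℝ≥0∞) * (‖Tc (M ^ N)‖₊ : ℝ≥0∞)) ^ (1 / N : ℝ) := by
        apply ENNReal.rpow_le_rpow _ (by positivity)
        exact_mod_cast hnn
    _ = (2:ℝ≥0∞) ^ (1 / N : ℝ) * (‖Tc (M ^ N)‖₊ : ℝ≥0∞) ^ (1 / N : ℝ) :=
        ENNReal.mul_rpow_of_nonneg _ _ (by positivity)

end Part2

theorem stmt11 {n m : ℕ} (K : Fin m → Matrix (Fin n) (Fin n) ℝ)
    (hK : ∀ t i j, 0 ≤ K t i j) (α : ℝ) (hα : α ∈ Set.Icc (0:ℝ) 1) :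
    specRad (∑ t, Matrix.of fun i j => (K t i j) ^ α * (K t j i) ^ (1 - α)) ≤
        specRad (Matrix.of fun i j => ((∑ t, K t) i j) ^ α * ((∑ t, K t) j i) ^ (1 - α)) ∧
      specRad (Matrix.of fun i j => ((∑ t, K t) i j) ^ α * ((∑ t, K t) j i) ^ (1 - α)) ≤
        specRad (∑ t, K t) := by
  have hMnn : ∀ i j, 0 ≤ (∑ t, K t) i j := by
    intro i j
    rw [Matrix.sum_apply]
    exact Finset.sum_nonneg fun t _ => hK t i j
  constructor
  · apply specRad_mono
    · intro i j
      rw [Matrix.sum_apply]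
      exact Finset.sum_nonneg fun t _ =>
        mul_nonneg (Real.rpow_nonneg (hK t i j) _) (Real.rpow_nonneg (hK t j i) _)
    · intro i j
      rw [Matrix.sum_apply]
      simp only [Matrix.of_apply, Matrix.sum_apply]
      exact hoelder Finset.univ _ _ (fun t => hK t i j) (fun t => hK t j i) hα
  · exact specRad_S_le hMnn hα
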